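/- Let H be a Hopf algebra. Every normalized convolution-invertible lazy left 2-cocycle σ on H is also a right 2-cocycle, i.e. σ(a₁b₁,c)σ(a₂,b₂) = σ(a,b₁c₁)σ(b₂,c₂) for all a,b,c ∈ H. -/

import Mathlib

open TensorProduct

noncomputable section

universe u

section Defs

variable {k : Type u} [CommRing k] {H : Type u} [Ring H] [Bialgebra k H]

/-- Convolution product on the dual of a coalgebra. -/
def conv {C : Type u} [AddCommGroup C] [Module k C] [Coalgebra k C]
    (f g : C →ₗ[k] k) : C →ₗ[k] k :=
  LinearMap.mul' k k ∘ₗ TensorProduct.map f g ∘ₗ Coalgebra.comul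

/-- `a ⊗ b ↦ a · ε(b)`. -/
def pr1 : H ⊗[k] H →ₗ[k] H :=
  (TensorProduct.rid k H).toLinearMap ∘ₗ TensorProduct.map LinearMap.id Coalgebra.counit

/-- `a ⊗ (b ⊗ c) ↦ ε(a) · (b ⊗ c)`. -/
def dropL3 : H ⊗[k] (H ⊗[k] H) →ₗ[k] H ⊗[k] H :=
  (TensorProduct.lid k (H ⊗[k] H)).toLinearMap ∘ₗ TensorProduct.map Coalgebra.counit LinearMap.id

/-- Multiplication of `H` as a linear map `H ⊗ H → H`. -/
def mulH : H ⊗[k] H →ₗ[k] H := LinearMap.mul' k H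

/-- `σ` is normalized: `σ(1,h) = ε(h) = σ(h,1)`. -/
def Normalized (σ : H ⊗[k] H →ₗ[k] k) : Prop :=
  ∀ h : H, σ (1 ⊗ₜ[k] h) = Coalgebra.counit (R := k) h ∧
    σ (h ⊗ₜ[k] 1) = Coalgebra.counit (R := k) h

/-- Left 2-cocycle condition: `σ(a₁,b₁)σ(a₂b₂,c) = σ(b₁,c₁)σ(a,b₂c₂)`, expressed as an
equality of linear functionals on `H ⊗ (H ⊗ H)` (convolution of the indicated factors). -/
def IsLeftCocycle (σ : H ⊗[k] H →ₗ[k] k) : Prop :=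
  conv (σ ∘ₗ TensorProduct.map LinearMap.id pr1)
      (σ ∘ₗ TensorProduct.map mulH LinearMap.id ∘ₗ (TensorProduct.assoc k H H H).symm.toLinearMap)
  = conv (σ ∘ₗ dropL3) (σ ∘ₗ TensorProduct.map LinearMap.id mulH)

/-- Right 2-cocycle condition: `σ(a₁b₁,c)σ(a₂,b₂) = σ(a,b₁c₁)σ(b₂,c₂)`. -/
def IsRightCocycle (σ : H ⊗[k] H →ₗ[k] k) : Prop :=
  conv (σ ∘ₗ TensorProduct.map mulH LinearMap.id ∘ₗ (TensorProduct.assoc k H H H).symm.toLinearMap)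
      (σ ∘ₗ TensorProduct.map LinearMap.id pr1)
  = conv (σ ∘ₗ TensorProduct.map LinearMap.id mulH) (σ ∘ₗ dropL3)

/-- Laziness for `σ : H ⊗ H → k`: `σ(h₁,h'₁)h₂h'₂ = h₁h'₁σ(h₂,h'₂)`. -/
def IsLazy2 (σ : H ⊗[k] H →ₗ[k] k) : Prop :=
  (TensorProduct.lid k H).toLinearMap ∘ₗ TensorProduct.map σ mulH ∘ₗ Coalgebra.comul
  = (TensorProduct.rid k H).toLinearMap ∘ₗ TensorProduct.map mulH σ ∘ₗ Coalgebra.comul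

/-- Laziness for `γ : H → k`: `γ(h₁)h₂ = h₁γ(h₂)`. -/
def IsLazy1 (γ : H →ₗ[k] k) : Prop :=
  (TensorProduct.lid k H).toLinearMap ∘ₗ TensorProduct.map γ LinearMap.id ∘ₗ Coalgebra.comul
  = (TensorProduct.rid k H).toLinearMap ∘ₗ TensorProduct.map LinearMap.id γ ∘ₗ Coalgebra.comul

/-- Neatness: `σ(a,b₁)σ(b₂,c) = σ(b₁,c)σ(a,b₂)`. -/
def Neat2 (σ : H ⊗[k] H →ₗ[k] k) : Prop :=
  conv (σ ∘ₗ TensorProduct.map LinearMap.id pr1) (σ ∘ₗ dropL3)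
  = conv (σ ∘ₗ dropL3) (σ ∘ₗ TensorProduct.map LinearMap.id pr1)

/-- `a ⊗ (b ⊗ (c ⊗ d)) ↦ ε(a) (b ⊗ (c ⊗ d))`. -/
def dropL4 : H ⊗[k] (H ⊗[k] (H ⊗[k] H)) →ₗ[k] H ⊗[k] (H ⊗[k] H) :=
  (TensorProduct.lid k (H ⊗[k] (H ⊗[k] H))).toLinearMap ∘ₗ
    TensorProduct.map Coalgebra.counit LinearMap.id

/-- `(a,b,c,d) ↦ σ(ab, c) ε(d)`. -/
def fPure (σ : H ⊗[k] H →ₗ[k] k) : H ⊗[k] (H ⊗[k] (H ⊗[k] H)) →ₗ[k] k :=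
  σ ∘ₗ TensorProduct.map mulH LinearMap.id ∘ₗ (TensorProduct.assoc k H H H).symm.toLinearMap ∘ₗ
    TensorProduct.map LinearMap.id (TensorProduct.map LinearMap.id pr1)

/-- `(a,b,c,d) ↦ ε(a) τ(b, c) ε(d)`. -/
def gPure (τ : H ⊗[k] H →ₗ[k] k) : H ⊗[k] (H ⊗[k] (H ⊗[k] H)) →ₗ[k] k :=
  τ ∘ₗ TensorProduct.map LinearMap.id pr1 ∘ₗ dropL4

/-- `(a,b,c,d) ↦ ε(a) σ(b, cd)`. -/
def hPure (σ : H ⊗[k] H →ₗ[k] k) : H ⊗[k] (H ⊗[k] (H ⊗[k] H)) →ₗ[k] k :=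
  σ ∘ₗ TensorProduct.map LinearMap.id mulH ∘ₗ dropL4

/-- Purity for a map `σ` with convolution inverse `τ = σ⁻¹`:
`σ(ab₁,c₁)σ⁻¹(b₂,c₂)σ(b₃,c₃d) = σ(b₁,c₁d)σ⁻¹(b₂,c₂)σ(ab₃,c₃)`. -/
def Pure2 (σ τ : H ⊗[k] H →ₗ[k] k) : Prop :=
  conv (C := H ⊗[k] (H ⊗[k] (H ⊗[k] H))) (conv (fPure σ) (gPure τ)) (hPure σ)
  = conv (C := H ⊗[k] (H ⊗[k] (H ⊗[k] H))) (conv (hPure σ) (gPure τ)) (fPure σ)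

/-- `D¹(γ)(h,h') = γ(h₁)γ(h'₁)γinv(h₂h'₂)` where `γinv` is the convolution inverse of `γ`. -/
def D1 (γ γinv : H →ₗ[k] k) : H ⊗[k] H →ₗ[k] k :=
  conv (LinearMap.mul' k k ∘ₗ TensorProduct.map γ γ) (γinv ∘ₗ mulH)

/-- The deformed product `h ·σ h' = σ(h₁,h'₁) h₂h'₂`. -/
def mulSig (σ : H ⊗[k] H →ₗ[k] k) : H ⊗[k] H →ₗ[k] H :=
  (TensorProduct.lid k H).toLinearMap ∘ₗ TensorProduct.map σ mulH ∘ₗ Coalgebra.comul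

/-- Neatness for `γ : H → k`: `γ(ab₁)γ(b₂c) = γ(b₁c)γ(ab₂)`. -/
def Neat1 (γ : H →ₗ[k] k) : Prop :=
  conv (γ ∘ₗ mulH ∘ₗ TensorProduct.map LinearMap.id pr1) (γ ∘ₗ mulH ∘ₗ dropL3)
  = conv (γ ∘ₗ mulH ∘ₗ dropL3) (γ ∘ₗ mulH ∘ₗ TensorProduct.map LinearMap.id pr1)

/-- `γ ∈ Reg¹(H)`: normalized and convolution invertible. -/
def Reg1 (γ : H →ₗ[k] k) : Prop :=
  γ 1 = 1 ∧ ∃ δ : H →ₗ[k] k, conv γ δ = (Coalgebra.counit : H →ₗ[k] k) ∧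
    conv δ γ = (Coalgebra.counit : H →ₗ[k] k)

/-- `σ ∈ Reg²(H)`: normalized and convolution invertible. -/
def Reg2 (σ : H ⊗[k] H →ₗ[k] k) : Prop :=
  Normalized σ ∧ ∃ τ : H ⊗[k] H →ₗ[k] k,
    conv σ τ = (Coalgebra.counit : H ⊗[k] H →ₗ[k] k) ∧
    conv τ σ = (Coalgebra.counit : H ⊗[k] H →ₗ[k] k)

/-- `a ⊗ b ↦ γ(a b₁) b₂`. -/
def stmt17L (γ : H →ₗ[k] k) : H ⊗[k] H →ₗ[k] H :=
  (TensorProduct.lid k H).toLinearMap ∘ₗ TensorProduct.map (γ ∘ₗ mulH) LinearMap.id ∘ₗ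
    (TensorProduct.assoc k H H H).symm.toLinearMap ∘ₗ
      TensorProduct.map LinearMap.id Coalgebra.comul

/-- `a ⊗ b ↦ γ(a b₂) b₁`. -/
def stmt17R (γ : H →ₗ[k] k) : H ⊗[k] H →ₗ[k] H :=
  (TensorProduct.lid k H).toLinearMap ∘ₗ TensorProduct.map (γ ∘ₗ mulH) LinearMap.id ∘ₗ
    (TensorProduct.assoc k H H H).symm.toLinearMap ∘ₗ
      TensorProduct.map LinearMap.id
        ((TensorProduct.comm k H H).toLinearMap ∘ₗ Coalgebra.comul)

end Defs


section Helpers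

variable {k : Type u} [CommRing k]
variable {A B : Type u} [AddCommGroup A] [AddCommGroup B] [Module k A] [Module k B]
  [Coalgebra k A] [Coalgebra k B]
variable {ιa ιb ιc : Type*}

lemma comul_tmul2 (a : A) (b : B) (ra : Coalgebra.Repr k a ιa) (rb : Coalgebra.Repr k b ιb) :
    Coalgebra.comul (R := k) (a ⊗ₜ[k] b) = ∑ i ∈ ra.index, ∑ j ∈ rb.index,
      (ra.left i ⊗ₜ[k] rb.left j) ⊗ₜ[k] (ra.right i ⊗ₜ[k] rb.right j) := by
  rw [show Coalgebra.comul (R := k) (a ⊗ₜ[k] b) =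
    TensorProduct.tensorTensorTensorComm k A A B B
      (Coalgebra.comul (R := k) a ⊗ₜ Coalgebra.comul (R := k) b) by
    simp [AlgebraTensorModule.tensorTensorTensorComm_eq], ← ra.eq, ← rb.eq]
  simp [sum_tmul, tmul_sum, tensorTensorTensorComm_tmul]
  rw [Finset.sum_comm]

/-- A `Repr` for a pure tensor built from `Repr`s of the factors. -/
def reprTmul {a : A} {b : B} (ra : Coalgebra.Repr k a ιa) (rb : Coalgebra.Repr k b ιb) :
    Coalgebra.Repr k (a ⊗ₜ[k] b) (ιa × ιb) where
  index := ra.index ×ˢ rb.index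
  left p := ra.left p.1 ⊗ₜ[k] rb.left p.2
  right p := ra.right p.1 ⊗ₜ[k] rb.right p.2
  eq := by rw [Finset.sum_product, comul_tmul2 a b ra rb]

variable {H : Type u} [Ring H] [Bialgebra k H]

lemma comul_tmul3 (a b c : H) (ra : Coalgebra.Repr k a ιa) (rb : Coalgebra.Repr k b ιb)
    (rc : Coalgebra.Repr k c ιc) :
    Coalgebra.comul (R := k) (a ⊗ₜ[k] (b ⊗ₜ[k] c)) =
      ∑ i ∈ ra.index, ∑ j ∈ rb.index, ∑ l ∈ rc.index,
      (ra.left i ⊗ₜ[k] (rb.left j ⊗ₜ[k] rc.left l)) ⊗ₜ[k]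
        (ra.right i ⊗ₜ[k] (rb.right j ⊗ₜ[k] rc.right l)) := by
  rw [comul_tmul2 a (b ⊗ₜ[k] c) ra (reprTmul rb rc)]
  simp only [reprTmul, Finset.sum_product]

lemma conv_tmul3 (F G : H ⊗[k] (H ⊗[k] H) →ₗ[k] k) (a b c : H) (ra : Coalgebra.Repr k a ιa)
    (rb : Coalgebra.Repr k b ιb) (rc : Coalgebra.Repr k c ιc) :
    conv F G (a ⊗ₜ[k] (b ⊗ₜ[k] c)) = ∑ i ∈ ra.index, ∑ j ∈ rb.index, ∑ l ∈ rc.index,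
      F (ra.left i ⊗ₜ[k] (rb.left j ⊗ₜ[k] rc.left l)) *
        G (ra.right i ⊗ₜ[k] (rb.right j ⊗ₜ[k] rc.right l)) := by
  simp only [conv, LinearMap.comp_apply, comul_tmul3 a b c ra rb rc, map_sum,
    TensorProduct.map_tmul, LinearMap.mul'_apply]

lemma ext3 {F G : H ⊗[k] (H ⊗[k] H) →ₗ[k] k}
    (h : ∀ a b c : H, F (a ⊗ₜ[k] (b ⊗ₜ[k] c)) = G (a ⊗ₜ[k] (b ⊗ₜ[k] c))) : F = G := by
  apply TensorProduct.ext'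
  intro a y
  induction y using TensorProduct.induction_on with
  | zero => simp [tmul_zero]
  | tmul b c => exact h a b c
  | add y z hy hz => rw [tmul_add, map_add, map_add, hy, hz]

lemma sum_smul_counit (c : H) (rc : Coalgebra.Repr k c ιc) :
    ∑ l ∈ rc.index, Coalgebra.counit (R := k) (rc.right l) • rc.left l = c := by
  have h := Coalgebra.sum_tmul_counit_eq (R := k) rc
  calc ∑ l ∈ rc.index, Coalgebra.counit (R := k) (rc.right l) • rc.left l
      = TensorProduct.rid k H
        (∑ l ∈ rc.index, rc.left l ⊗ₜ[k] Coalgebra.counit (R := k) (rc.right l)) := by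
        rw [map_sum]; simp only [rid_tmul]
    _ = TensorProduct.rid k H (c ⊗ₜ[k] 1) := by rw [h]
    _ = c := by simp only [rid_tmul, one_smul]

lemma sum_counit_smul (c : H) (rc : Coalgebra.Repr k c ιc) :
    ∑ l ∈ rc.index, Coalgebra.counit (R := k) (rc.left l) • rc.right l = c := by
  have h := Coalgebra.sum_counit_tmul_eq (R := k) rc
  calc ∑ l ∈ rc.index, Coalgebra.counit (R := k) (rc.left l) • rc.right l
      = TensorProduct.lid k H
        (∑ l ∈ rc.index, Coalgebra.counit (R := k) (rc.left l) ⊗ₜ[k] rc.right l) := by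
        rw [map_sum]; simp only [lid_tmul]
    _ = TensorProduct.lid k H ((1 : k) ⊗ₜ[k] c) := by rw [h]
    _ = c := by simp only [lid_tmul, one_smul]

lemma lazy_tmul (σ : H ⊗[k] H →ₗ[k] k) (hlazy : IsLazy2 σ) (a b : H)
    (ra : Coalgebra.Repr k a ιa) (rb : Coalgebra.Repr k b ιb) :
    ∑ i ∈ ra.index, ∑ j ∈ rb.index,
      σ (ra.left i ⊗ₜ[k] rb.left j) • (ra.right i * rb.right j)
    = ∑ i ∈ ra.index, ∑ j ∈ rb.index,
      σ (ra.right i ⊗ₜ[k] rb.right j) • (ra.left i * rb.left j) := by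
  have h := LinearMap.congr_fun hlazy (a ⊗ₜ[k] b)
  simp only [IsLazy2, mulH, LinearMap.comp_apply, LinearEquiv.coe_coe,
    comul_tmul2 a b ra rb, map_sum, TensorProduct.map_tmul, lid_tmul, rid_tmul,
    LinearMap.mul'_apply] at h
  exact h

end Helpers

section Swaps
variable {k : Type u} [CommRing k] {H : Type u} [Ring H] [Bialgebra k H]

lemma sum_absorb1 (σ : H ⊗[k] H →ₗ[k] k) (x : H) (s : k) (c : H) (rc : Coalgebra.Repr k c ιc) :
    ∑ l ∈ rc.index, σ (x ⊗ₜ[k] rc.left l) * (Coalgebra.counit (R := k) (rc.right l) * s)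
      = σ (x ⊗ₜ[k] c) * s := by
  conv_rhs => rw [← sum_smul_counit c rc]
  rw [tmul_sum, map_sum, Finset.sum_mul]
  refine Finset.sum_congr rfl fun l _ => ?_
  rw [tmul_smul, map_smul, smul_eq_mul]; ring

lemma sum_absorb2 (σ : H ⊗[k] H →ₗ[k] k) (x : H) (s : k) (c : H) (rc : Coalgebra.Repr k c ιc) :
    ∑ l ∈ rc.index, (Coalgebra.counit (R := k) (rc.left l) * s) * σ (x ⊗ₜ[k] rc.right l)
      = s * σ (x ⊗ₜ[k] c) := by
  conv_rhs => rw [← sum_counit_smul c rc]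
  rw [tmul_sum, map_sum, Finset.mul_sum]
  refine Finset.sum_congr rfl fun l _ => ?_
  rw [tmul_smul, map_smul, smul_eq_mul]; ring

lemma sum_absorb3 (σ : H ⊗[k] H →ₗ[k] k) (y : H) (s : k) (a : H) (ra : Coalgebra.Repr k a ιa) :
    ∑ i ∈ ra.index, (Coalgebra.counit (R := k) (ra.left i) * s) * σ (ra.right i ⊗ₜ[k] y)
      = s * σ (a ⊗ₜ[k] y) := by
  conv_rhs => rw [← sum_counit_smul a ra]
  rw [sum_tmul, map_sum, Finset.mul_sum]
  refine Finset.sum_congr rfl fun l _ => ?_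
  rw [← smul_tmul', map_smul, smul_eq_mul]; ring

lemma sum_absorb4 (σ : H ⊗[k] H →ₗ[k] k) (y : H) (s : k) (a : H) (ra : Coalgebra.Repr k a ιa) :
    ∑ i ∈ ra.index, σ (ra.left i ⊗ₜ[k] y) * (Coalgebra.counit (R := k) (ra.right i) * s)
      = σ (a ⊗ₜ[k] y) * s := by
  conv_rhs => rw [← sum_smul_counit a ra]
  rw [sum_tmul, map_sum, Finset.sum_mul]
  refine Finset.sum_congr rfl fun l _ => ?_
  rw [← smul_tmul', map_smul, smul_eq_mul]; ring

lemma swap1 (σ : H ⊗[k] H →ₗ[k] k) (hlazy : IsLazy2 σ) :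
    conv (σ ∘ₗ TensorProduct.map mulH LinearMap.id ∘ₗ (TensorProduct.assoc k H H H).symm.toLinearMap)
      (σ ∘ₗ TensorProduct.map LinearMap.id pr1)
    = conv (σ ∘ₗ TensorProduct.map LinearMap.id pr1)
      (σ ∘ₗ TensorProduct.map mulH LinearMap.id ∘ₗ (TensorProduct.assoc k H H H).symm.toLinearMap) := by
  apply ext3
  intro a b c
  set ra := Coalgebra.Repr.arbitrary k a with hra
  set rb := Coalgebra.Repr.arbitrary k b with hrb
  set rc := Coalgebra.Repr.arbitrary k c with hrc
  rw [conv_tmul3 _ _ a b c ra rb rc, conv_tmul3 _ _ a b c ra rb rc]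
  simp only [LinearMap.comp_apply, LinearEquiv.coe_coe, assoc_symm_tmul, TensorProduct.map_tmul,
    LinearMap.id_coe, id_eq, mulH, LinearMap.mul'_apply, pr1, rid_tmul, tmul_smul, map_smul,
    smul_eq_mul]
  have lazyc : ∑ i ∈ ra.index, ∑ j ∈ rb.index,
      σ (ra.left i ⊗ₜ[k] rb.left j) * σ ((ra.right i * rb.right j) ⊗ₜ[k] c)
    = ∑ i ∈ ra.index, ∑ j ∈ rb.index,
      σ (ra.right i ⊗ₜ[k] rb.right j) * σ ((ra.left i * rb.left j) ⊗ₜ[k] c) := by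
    have L := lazy_tmul σ hlazy a b ra rb
    have := congrArg (fun x : H => σ (x ⊗ₜ[k] c)) L
    simpa only [sum_tmul, map_sum, ← smul_tmul', map_smul, smul_eq_mul] using this
  calc ∑ i ∈ ra.index, ∑ j ∈ rb.index, ∑ l ∈ rc.index,
        σ ((ra.left i * rb.left j) ⊗ₜ[k] rc.left l) *
          (Coalgebra.counit (R := k) (rc.right l) * σ (ra.right i ⊗ₜ[k] rb.right j))
      = ∑ i ∈ ra.index, ∑ j ∈ rb.index,
          σ ((ra.left i * rb.left j) ⊗ₜ[k] c) * σ (ra.right i ⊗ₜ[k] rb.right j) := by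
        refine Finset.sum_congr rfl fun i _ => Finset.sum_congr rfl fun j _ => ?_
        exact sum_absorb1 σ _ _ c rc
    _ = ∑ i ∈ ra.index, ∑ j ∈ rb.index,
          σ (ra.left i ⊗ₜ[k] rb.left j) * σ ((ra.right i * rb.right j) ⊗ₜ[k] c) := by
        rw [lazyc]
        exact Finset.sum_congr rfl fun i _ => Finset.sum_congr rfl fun j _ => mul_comm _ _
    _ = ∑ i ∈ ra.index, ∑ j ∈ rb.index, ∑ l ∈ rc.index,
          Coalgebra.counit (R := k) (rc.left l) * σ (ra.left i ⊗ₜ[k] rb.left j) *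
            σ ((ra.right i * rb.right j) ⊗ₜ[k] rc.right l) := by
        refine Finset.sum_congr rfl fun i _ => Finset.sum_congr rfl fun j _ => ?_
        exact (sum_absorb2 σ _ _ c rc).symm

lemma swap2 (σ : H ⊗[k] H →ₗ[k] k) (hlazy : IsLazy2 σ) :
    conv (σ ∘ₗ dropL3) (σ ∘ₗ TensorProduct.map LinearMap.id mulH)
    = conv (σ ∘ₗ TensorProduct.map LinearMap.id mulH) (σ ∘ₗ dropL3) := by
  apply ext3
  intro a b c
  set ra := Coalgebra.Repr.arbitrary k a with hra
  set rb := Coalgebra.Repr.arbitrary k b with hrb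
  set rc := Coalgebra.Repr.arbitrary k c with hrc
  rw [conv_tmul3 _ _ a b c ra rb rc, conv_tmul3 _ _ a b c ra rb rc]
  simp only [LinearMap.comp_apply, LinearEquiv.coe_coe, TensorProduct.map_tmul,
    LinearMap.id_coe, id_eq, mulH, LinearMap.mul'_apply, dropL3, lid_tmul, map_smul,
    smul_eq_mul]
  have lazybc : ∑ j ∈ rb.index, ∑ l ∈ rc.index,
      σ (rb.left j ⊗ₜ[k] rc.left l) * σ (a ⊗ₜ[k] (rb.right j * rc.right l))
    = ∑ j ∈ rb.index, ∑ l ∈ rc.index,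
      σ (rb.right j ⊗ₜ[k] rc.right l) * σ (a ⊗ₜ[k] (rb.left j * rc.left l)) := by
    have L := lazy_tmul σ hlazy b c rb rc
    have := congrArg (fun x : H => σ (a ⊗ₜ[k] x)) L
    simpa only [tmul_sum, tmul_smul, map_sum, map_smul, smul_eq_mul] using this
  calc ∑ i ∈ ra.index, ∑ j ∈ rb.index, ∑ l ∈ rc.index,
        Coalgebra.counit (R := k) (ra.left i) * σ (rb.left j ⊗ₜ[k] rc.left l) *
          σ (ra.right i ⊗ₜ[k] (rb.right j * rc.right l))
      = ∑ j ∈ rb.index, ∑ l ∈ rc.index,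
          σ (rb.left j ⊗ₜ[k] rc.left l) * σ (a ⊗ₜ[k] (rb.right j * rc.right l)) := by
        rw [Finset.sum_comm]
        refine Finset.sum_congr rfl fun j _ => ?_
        rw [Finset.sum_comm]
        refine Finset.sum_congr rfl fun l _ => ?_
        exact sum_absorb3 σ _ _ a ra
    _ = ∑ j ∈ rb.index, ∑ l ∈ rc.index,
          σ (a ⊗ₜ[k] (rb.left j * rc.left l)) * σ (rb.right j ⊗ₜ[k] rc.right l) := by
        rw [lazybc]
        exact Finset.sum_congr rfl fun j _ => Finset.sum_congr rfl fun l _ => mul_comm _ _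
    _ = ∑ i ∈ ra.index, ∑ j ∈ rb.index, ∑ l ∈ rc.index,
          σ (ra.left i ⊗ₜ[k] (rb.left j * rc.left l)) *
            (Coalgebra.counit (R := k) (ra.right i) * σ (rb.right j ⊗ₜ[k] rc.right l)) := by
        symm
        rw [Finset.sum_comm]
        refine Finset.sum_congr rfl fun j _ => ?_
        rw [Finset.sum_comm]
        refine Finset.sum_congr rfl fun l _ => ?_
        exact sum_absorb4 σ _ _ a ra

end Swaps

/-- Every normalized convolution-invertible lazy left 2-cocycle on a Hopf algebra is also a
right 2-cocycle. -/
theorem stmt6 {k : Type u} [Field k] {H : Type u} [Ring H] [HopfAlgebra k H]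
    (σ τ : H ⊗[k] H →ₗ[k] k) (hnorm : Normalized σ)
    (hinv1 : conv σ τ = (Coalgebra.counit : H ⊗[k] H →ₗ[k] k))
    (hinv2 : conv τ σ = (Coalgebra.counit : H ⊗[k] H →ₗ[k] k))
    (hlazy : IsLazy2 σ) (hcoc : IsLeftCocycle σ) :
    IsRightCocycle σ := by
  unfold IsRightCocycle
  rw [swap1 σ hlazy, hcoc, swap2 σ hlazy]

end
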